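/- Let k be a positive integer and n an even positive integer. If G is a connected graph on n vertices with at least C(n-1,2) + 2k edges, then either every matching of size k in G extends to a perfect matching of G, or G is isomorphic to the join of K_{2k} with the disjoint union of K_{n-2k-1} and K_1, or G is isomorphic to the join of K_{2k+1} with three isolated vertices. -/

import Mathlib

open SimpleGraph

/-- The join of two simple graphs: their disjoint union together with all
edges between the two parts. -/
def gJoin {α β : Type*} (G : SimpleGraph α) (H : SimpleGraph β) : SimpleGraph (α ⊕ β) :=
  (G ⊕g H) ⊔ SimpleGraph.fromRel (fun x y => x.isLeft ∧ y.isRight)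

/-- `G` is `k`-extendable: every matching of size `k` in `G` extends to a
perfect matching of `G`. -/
def kExtendable {V : Type*} (G : SimpleGraph V) (k : ℕ) : Prop :=
  ∀ M : G.Subgraph, M.IsMatching → M.edgeSet.ncard = k →
    ∃ P : G.Subgraph, P.IsPerfectMatching ∧ M.edgeSet ⊆ P.edgeSet

open Finset

section Helpers
variable {V : Type*} [Fintype V] [DecidableEq V] (H : SimpleGraph V)

open scoped Classical in
/-- complement edges of `H` lying within `s` -/
noncomputable def cwE (s : Finset V) : Finset (Sym2 V) :=
  Hᶜ.edgeFinset.filter (fun e => ∀ x ∈ e, x ∈ s)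

variable {H}

lemma mem_cwE_pair {s : Finset V} {v w : V} :
    s(v,w) ∈ cwE H s ↔ Hᶜ.Adj v w ∧ v ∈ s ∧ w ∈ s := by
  simp [cwE, mem_edgeFinset]

lemma mem_cwE_elim {s : Finset V} {e : Sym2 V} (he : e ∈ cwE H s) :
    ∃ a b, e = s(a,b) ∧ Hᶜ.Adj a b ∧ a ∈ s ∧ b ∈ s := by
  induction e with
  | _ a b => exact ⟨a, b, rfl, (mem_cwE_pair.1 he).1, (mem_cwE_pair.1 he).2⟩

lemma mem_of_mem_cwE {s : Finset V} {e : Sym2 V} (he : e ∈ cwE H s) {x : V} (hx : x ∈ e) :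
    x ∈ s := by
  simp only [cwE, Finset.mem_filter] at he
  exact he.2 x hx

open scoped Classical in
lemma mem_cwE_edgeSet {s : Finset V} {e : Sym2 V} (he : e ∈ cwE H s) : e ∈ Hᶜ.edgeSet := by
  simp only [cwE, Finset.mem_filter, mem_edgeFinset] at he
  exact he.1

lemma cwE_erase (s : Finset V) (v y : V) :
    cwE H ((s.erase v).erase y) = (cwE H s).filter (fun e => v ∉ e ∧ y ∉ e) := by
  ext e
  induction e with
  | _ a b =>
    simp only [cwE, Finset.mem_filter, Sym2.mem_iff, Finset.mem_erase]
    constructor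
    · rintro ⟨he, h⟩
      refine ⟨⟨he, fun x hx => (h x hx).2.2⟩, ?_, ?_⟩ <;> rintro (rfl|rfl)
      · exact (h _ (Or.inl rfl)).2.1 rfl
      · exact (h _ (Or.inr rfl)).2.1 rfl
      · exact (h _ (Or.inl rfl)).1 rfl
      · exact (h _ (Or.inr rfl)).1 rfl
    · rintro ⟨⟨he, h⟩, hv, hy⟩
      refine ⟨he, fun x hx => ⟨?_, ?_, h x hx⟩⟩
      · rintro rfl; exact hy hx
      · rintro rfl; exact hv hx

open scoped Classical in
lemma card_cwE_erase (s : Finset V) (v y : V) :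
    (cwE H ((s.erase v).erase y)).card
      = (cwE H s).card - ((cwE H s).filter (fun e => v ∈ e ∨ y ∈ e)).card := by
  rw [cwE_erase]
  have h1 : ∀ e : Sym2 V, (v ∉ e ∧ y ∉ e) ↔ ¬(v ∈ e ∨ y ∈ e) := fun e => by tauto
  rw [Finset.filter_congr (fun e _ => by rw [h1])]
  have := Finset.card_filter_add_card_filter_not
    (s := cwE H s) (p := fun e => v ∈ e ∨ y ∈ e)
  omega

open scoped Classical in
/-- complement-neighbors of `v` within `s` -/
noncomputable def ncF (H : SimpleGraph V) (s : Finset V) (v : V) : Finset V :=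
  (s.erase v).filter (fun y => Hᶜ.Adj v y)

open scoped Classical in
lemma ncF_card_le_touch {s : Finset V} {v : V} (hv : v ∈ s) :
    (ncF H s v).card ≤ ((cwE H s).filter (fun e => v ∈ e)).card := by
  apply Finset.card_le_card_of_injOn (fun y => s(v,y))
  · intro y hy
    simp only [ncF, Finset.mem_coe, Finset.mem_filter, Finset.mem_erase] at hy
    simp only [Finset.mem_filter, Sym2.mem_iff]
    exact Finset.mem_filter.2 ⟨mem_cwE_pair.2 ⟨hy.2, hv, hy.1.2⟩, by simp⟩
  · intro y1 h1 y2 h2 he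
    simp only [ncF, Finset.coe_filter, Set.mem_setOf_eq, Finset.mem_erase] at h1 h2
    rcases Sym2.eq_iff.1 he with ⟨-, h⟩ | ⟨rfl, h⟩
    · exact h
    · exact absurd h h1.1.1

open scoped Classical in
lemma ncF_card_le_c {s : Finset V} {v : V} (hv : v ∈ s) :
    (ncF H s v).card ≤ (cwE H s).card :=
  (ncF_card_le_touch hv).trans (Finset.card_le_card (Finset.filter_subset _ _))

/-- existence of an H-neighbour inside s -/
lemma exists_nbr {s : Finset V} {v : V} (hv : v ∈ s)
    (h : (ncF H s v).card < s.card - 1) :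
    ∃ y ∈ s.erase v, H.Adj v y := by
  classical
  have hsub : ncF H s v ⊆ s.erase v := Finset.filter_subset _ _
  have hne : ncF H s v ≠ s.erase v := by
    intro he
    rw [he, Finset.card_erase_of_mem hv] at h
    exact lt_irrefl _ h
  obtain ⟨y, hy, hyn⟩ := Finset.exists_of_ssubset (hsub.ssubset_of_ne hne)
  refine ⟨y, hy, ?_⟩
  have hvy : v ≠ y := fun h => (Finset.mem_erase.1 hy).1 h.symm
  have : ¬ Hᶜ.Adj v y := fun ha => hyn (Finset.mem_filter.2 ⟨hy, ha⟩)
  rw [compl_adj] at this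
  push_neg at this
  exact this hvy

lemma dC_two_le {s : Finset V} {v : V} (hv : v ∈ s) {e1 e2 : Sym2 V}
    (h1 : e1 ∈ cwE H s) (h2 : e2 ∈ cwE H s) (hne : e1 ≠ e2)
    (hv1 : v ∈ e1) (hv2 : v ∈ e2) : 2 ≤ (ncF H s v).card := by
  classical
  obtain ⟨a, ha⟩ := Sym2.mem_iff_exists.1 hv1
  obtain ⟨b, hb⟩ := Sym2.mem_iff_exists.1 hv2
  subst ha hb
  have hadj1 : Hᶜ.Adj v a := (mem_cwE_pair.1 h1).1
  have hadj2 : Hᶜ.Adj v b := (mem_cwE_pair.1 h2).1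
  have hab : a ≠ b := fun h => hne (by rw [h])
  have hha : a ∈ ncF H s v := Finset.mem_filter.2
    ⟨Finset.mem_erase.2 ⟨hadj1.ne', (mem_cwE_pair.1 h1).2.2⟩, hadj1⟩
  have hhb : b ∈ ncF H s v := Finset.mem_filter.2
    ⟨Finset.mem_erase.2 ⟨hadj2.ne', (mem_cwE_pair.1 h2).2.2⟩, hadj2⟩
  exact Finset.one_lt_card.2 ⟨a, hha, b, hhb, hab⟩

end Helpers

section Main
variable {V : Type*} [Fintype V] [DecidableEq V] {H : SimpleGraph V}

lemma matching_pick {s : Finset V} (hd : ∀ v ∈ s, (ncF H s v).card < 2)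
    {e1 e2 : Sym2 V} (h1 : e1 ∈ cwE H s) (h2 : e2 ∈ cwE H s) (hne : e1 ≠ e2)
    {v z : V} (hv : v ∈ e1) (hz : z ∈ e2) :
    H.Adj v z ∧ z ∈ s.erase v := by
  have hvs : v ∈ s := mem_of_mem_cwE h1 hv
  have hzs : z ∈ s := mem_of_mem_cwE h2 hz
  have hvz : v ≠ z := by
    rintro rfl
    exact absurd (dC_two_le hvs h1 h2 hne hv hz) (by have := hd v hvs; omega)
  have hnadj : ¬ Hᶜ.Adj v z := by
    intro ha
    have h3 : s(v,z) ∈ cwE H s := mem_cwE_pair.2 ⟨ha, hvs, hzs⟩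
    by_cases he : e1 = s(v,z)
    · have hz1 : z ∈ e1 := by rw [he]; simp
      exact absurd (dC_two_le hzs h1 h2 hne hz1 hz) (by have := hd z hzs; omega)
    · exact absurd (dC_two_le hvs h1 h3 he hv (by simp)) (by have := hd v hvs; omega)
  have hadj : H.Adj v z := by
    by_contra hna
    exact hnadj ((compl_adj H v z).2 ⟨hvz, hna⟩)
  exact ⟨hadj, Finset.mem_erase.2 ⟨hvz.symm, hzs⟩⟩

open scoped Classical in
lemma touch_le {s : Finset V} (v y : V) :
    (cwE H ((s.erase v).erase y)).card
      ≤ (cwE H s).card - ((cwE H s).filter (fun e => v ∈ e ∨ y ∈ e)).card := by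
  rw [card_cwE_erase]

open scoped Classical in
lemma selA {s : Finset V} (hm : 2 ≤ s.card) (hc : (cwE H s).card ≤ s.card - 2) :
    ∃ v ∈ s, ∃ y ∈ s.erase v, H.Adj v y ∧
      (cwE H ((s.erase v).erase y)).card ≤ s.card - 4 := by
  by_cases hsm : (cwE H s).card ≤ s.card - 4
  · obtain ⟨v, hv⟩ := Finset.card_pos.1 (by omega : 0 < s.card)
    have hnc : (ncF H s v).card ≤ (cwE H s).card := ncF_card_le_c hv
    obtain ⟨y, hy, hadj⟩ := exists_nbr (H := H) hv (by omega)
    exact ⟨v, hv, y, hy, hadj, le_trans (touch_le v y) (by omega)⟩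
  · have hm3 : 3 ≤ s.card := by omega
    have hc1 : 1 ≤ (cwE H s).card := by omega
    by_cases hd : ∃ v ∈ s, 2 ≤ (ncF H s v).card
    · obtain ⟨v, hv, hd2⟩ := hd
      have hnc : (ncF H s v).card ≤ (cwE H s).card := ncF_card_le_c hv
      obtain ⟨y, hy, hadj⟩ := exists_nbr (H := H) hv (by omega)
      refine ⟨v, hv, y, hy, hadj, le_trans (touch_le v y) ?_⟩
      have htch : 2 ≤ ((cwE H s).filter (fun e => v ∈ e ∨ y ∈ e)).card := by
        refine le_trans (le_trans hd2 (ncF_card_le_touch hv)) (Finset.card_le_card ?_)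
        exact Finset.monotone_filter_right _ (fun e _ he => Or.inl he)
      omega
    · push_neg at hd
      by_cases hc2 : 2 ≤ (cwE H s).card
      · obtain ⟨e1, h1, e2, h2, hne⟩ := Finset.one_lt_card.1 hc2
        obtain ⟨a, b, rfl, -, -, -⟩ := mem_cwE_elim h1
        obtain ⟨a', b', rfl, -, -, -⟩ := mem_cwE_elim h2
        have hva : a ∈ (s(a,b) : Sym2 V) := by simp
        have hza : a' ∈ (s(a',b') : Sym2 V) := by simp
        obtain ⟨hadj, hz⟩ := matching_pick hd h1 h2 hne hva hza
        refine ⟨a, mem_of_mem_cwE h1 hva, a', hz, hadj, le_trans (touch_le a a') ?_⟩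
        have htch : 2 ≤ ((cwE H s).filter (fun e => a ∈ e ∨ a' ∈ e)).card := by
          apply Finset.one_lt_card.2
          exact ⟨s(a,b), Finset.mem_filter.2 ⟨h1, Or.inl hva⟩,
                 s(a',b'), Finset.mem_filter.2 ⟨h2, Or.inr hza⟩, hne⟩
        omega
      · obtain ⟨e1, h1⟩ := Finset.card_pos.1 (by omega : 0 < (cwE H s).card)
        obtain ⟨a, b, rfl, -, has, -⟩ := mem_cwE_elim h1
        obtain ⟨y, hy, hadj⟩ := exists_nbr (H := H) has (by have h9 := hd a has; omega)
        refine ⟨a, has, y, hy, hadj, le_trans (touch_le a y) ?_⟩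
        have htch : 1 ≤ ((cwE H s).filter (fun e => a ∈ e ∨ y ∈ e)).card :=
          Finset.card_pos.2 ⟨s(a,b), Finset.mem_filter.2 ⟨h1, Or.inl (by simp)⟩⟩
        omega

lemma lemA : ∀ (N : ℕ) (s : Finset V), s.card ≤ N → Even s.card →
    (cwE H s).card ≤ s.card - 2 →
    ∃ M : H.Subgraph, M.IsMatching ∧ M.verts = ↑s := by
  intro N
  induction N with
  | zero =>
    intro s hs _ _
    have : s = ∅ := Finset.card_eq_zero.1 (by omega)
    subst this
    exact ⟨⊥, fun v hv => by simp [Subgraph.verts_bot] at hv, by simp⟩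
  | succ N ih =>
    intro s hsN hev hc
    rcases Nat.eq_zero_or_pos s.card with h0 | hpos
    · have : s = ∅ := Finset.card_eq_zero.1 h0
      subst this
      exact ⟨⊥, fun v hv => by simp [Subgraph.verts_bot] at hv, by simp⟩
    · have hm : 2 ≤ s.card := by
        rcases hev with ⟨t, ht⟩; omega
      obtain ⟨v, hv, y, hy, hadj, hbound⟩ := selA hm hc
      set s' := (s.erase v).erase y with hs'
      have hcard' : s'.card = s.card - 2 := by
        rw [hs', Finset.card_erase_of_mem hy, Finset.card_erase_of_mem hv]
        omega
      have hev' : Even s'.card := by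
        obtain ⟨t, ht⟩ := hev
        exact ⟨t - 1, by omega⟩
      obtain ⟨M', hM', hMv⟩ := ih s' (by omega) hev' (by rw [hcard']; omega)
      have hvs' : v ∉ s' := by simp [hs']
      have hys' : y ∉ s' := by simp [hs']
      refine ⟨M' ⊔ H.subgraphOfAdj hadj, ?_, ?_⟩
      · refine hM'.sup (Subgraph.IsMatching.subgraphOfAdj hadj) ?_
        rw [hM'.support_eq_verts, (Subgraph.IsMatching.subgraphOfAdj hadj).support_eq_verts,
          hMv, subgraphOfAdj_verts]
        rw [Set.disjoint_left]
        intro x hx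
        simp only [Set.mem_insert_iff, Set.mem_singleton_iff]
        push_neg
        constructor
        · rintro rfl; exact hvs' hx
        · rintro rfl; exact hys' hx
      · rw [Subgraph.verts_sup, hMv, subgraphOfAdj_verts]
        ext x
        simp only [Set.mem_union, Finset.coe_sort_coe, Set.mem_insert_iff,
          Set.mem_singleton_iff, Finset.mem_coe, hs', Finset.mem_erase]
        constructor
        · rintro (⟨-, -, hx⟩ | rfl | rfl)
          · exact hx
          · exact hv
          · exact Finset.mem_of_mem_erase hy
        · intro hx
          by_cases hxv : x = v
          · exact Or.inr (Or.inl hxv)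
          · by_cases hxy : x = y
            · exact Or.inr (Or.inr hxy)
            · exact Or.inl ⟨hxy, hxv, hx⟩

end Main

section LemB
variable {V : Type*} [Fintype V] [DecidableEq V] {H : SimpleGraph V}

lemma combine {s : Finset V} {v y : V} (hv : v ∈ s) (hy : y ∈ s.erase v)
    (hadj : H.Adj v y)
    (hM' : ∃ M' : H.Subgraph, M'.IsMatching ∧ M'.verts = ↑((s.erase v).erase y)) :
    ∃ M : H.Subgraph, M.IsMatching ∧ M.verts = ↑s := by
  obtain ⟨M', hM', hMv⟩ := hM'
  set s' := (s.erase v).erase y with hs'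
  have hvs' : v ∉ s' := by simp [hs']
  have hys' : y ∉ s' := by simp [hs']
  refine ⟨M' ⊔ H.subgraphOfAdj hadj, ?_, ?_⟩
  · refine hM'.sup (Subgraph.IsMatching.subgraphOfAdj hadj) ?_
    rw [hM'.support_eq_verts, (Subgraph.IsMatching.subgraphOfAdj hadj).support_eq_verts,
      hMv, subgraphOfAdj_verts]
    rw [Set.disjoint_left]
    intro x hx
    simp only [Set.mem_insert_iff, Set.mem_singleton_iff]
    push_neg
    constructor
    · rintro rfl; exact hvs' hx
    · rintro rfl; exact hys' hx
  · rw [Subgraph.verts_sup, hMv, subgraphOfAdj_verts]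
    ext x
    simp only [Set.mem_union, Set.mem_insert_iff,
      Set.mem_singleton_iff, Finset.mem_coe, hs', Finset.mem_erase]
    constructor
    · rintro (⟨-, -, hx⟩ | rfl | rfl)
      · exact hx
      · exact hv
      · exact Finset.mem_of_mem_erase hy
    · intro hx
      by_cases hxv : x = v
      · exact Or.inr (Or.inl hxv)
      · by_cases hxy : x = y
        · exact Or.inr (Or.inr hxy)
        · exact Or.inl ⟨hxy, hxv, hx⟩

/-- from selection with remainder ≤ card - 4, get a matching on s -/
lemma sel_to_match {s : Finset V} (hev : Even s.card) {v y : V} (hv : v ∈ s)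
    (hy : y ∈ s.erase v) (hadj : H.Adj v y)
    (hb : (cwE H ((s.erase v).erase y)).card ≤ s.card - 4) :
    ∃ M : H.Subgraph, M.IsMatching ∧ M.verts = ↑s := by
  refine combine hv hy hadj (lemA ((s.erase v).erase y).card _ le_rfl ?_ ?_)
  · obtain ⟨t, ht⟩ := hev
    rw [Finset.card_erase_of_mem hy, Finset.card_erase_of_mem hv]
    exact ⟨t - 1, by omega⟩
  · rw [Finset.card_erase_of_mem hy, Finset.card_erase_of_mem hv]
    omega

open scoped Classical in
lemma handshake {s : Finset V} (hd : ∀ v ∈ s, (ncF H s v).card ≤ 1) :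
    2 * (cwE H s).card ≤ s.card := by
  set f : Sym2 V → Finset V := fun e => Finset.univ.filter (· ∈ e) with hf
  have hcard2 : ∀ e ∈ cwE H s, (f e).card = 2 := by
    intro e he
    obtain ⟨p, q, rfl, hadj, -, -⟩ := mem_cwE_elim he
    have : f s(p,q) = {p, q} := by
      ext x; simp [hf, Sym2.mem_iff]
    rw [this, Finset.card_insert_of_notMem (by simp [hadj.ne]), Finset.card_singleton]
  have hdisj : ∀ e1 ∈ cwE H s, ∀ e2 ∈ cwE H s, e1 ≠ e2 → Disjoint (f e1) (f e2) := by
    intro e1 h1 e2 h2 hne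
    rw [Finset.disjoint_left]
    intro x hx1 hx2
    simp only [hf, Finset.mem_filter] at hx1 hx2
    have hxs : x ∈ s := mem_of_mem_cwE h1 hx1.2
    exact absurd (dC_two_le hxs h1 h2 hne hx1.2 hx2.2) (by have := hd x hxs; omega)
  have hsub : (cwE H s).biUnion f ⊆ s := by
    intro x hx
    simp only [Finset.mem_biUnion, hf, Finset.mem_filter] at hx
    obtain ⟨e, he, -, hxe⟩ := hx
    exact mem_of_mem_cwE he hxe
  calc 2 * (cwE H s).card = ∑ e ∈ cwE H s, (f e).card := by
        rw [Finset.sum_congr rfl hcard2, Finset.sum_const, smul_eq_mul, mul_comm]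
    _ = ((cwE H s).biUnion f).card := (Finset.card_biUnion hdisj).symm
    _ ≤ s.card := Finset.card_le_card hsub

lemma pair_in_triple {v a b p q : V} (hp : p = v ∨ p = a ∨ p = b)
    (hq : q = v ∨ q = a ∨ q = b) (hpq : p ≠ q) :
    s(p,q) = s(v,a) ∨ s(p,q) = s(v,b) ∨ s(p,q) = s(a,b) := by
  rcases hp with rfl|rfl|rfl <;> rcases hq with rfl|rfl|rfl <;>
    simp_all [Sym2.eq_iff] <;> tauto

open scoped Classical in
lemma lemB {s : Finset V} (hev : Even s.card) (hc : (cwE H s).card ≤ s.card - 1) :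
    (∃ M : H.Subgraph, M.IsMatching ∧ M.verts = ↑s) ∨
    (∃ w ∈ s, ∀ x ∈ s.erase w, Hᶜ.Adj w x) ∨
    (s.card = 4 ∧ ∃ t ⊆ s, t.card = 3 ∧ ∀ a ∈ t, ∀ b ∈ t, a ≠ b → Hᶜ.Adj a b) := by
  by_cases hc2 : (cwE H s).card ≤ s.card - 2
  · exact Or.inl (lemA s.card s le_rfl hev hc2)
  by_cases hstar : ∃ w ∈ s, ∀ x ∈ s.erase w, Hᶜ.Adj w x
  · exact Or.inr (Or.inl hstar)
  push_neg at hstar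
  have hm2 : 2 ≤ s.card := by
    rcases hev with ⟨t, ht⟩; omega
  -- every vertex in s has complement-degree ≤ card - 2
  have hd2a : ∀ w ∈ s, (ncF H s w).card ≤ s.card - 2 := by
    intro w hw
    obtain ⟨x, hx, hnadj⟩ := hstar w hw
    have hss : ncF H s w ⊂ s.erase w := by
      refine (Finset.filter_subset _ _).ssubset_of_ne ?_
      intro he
      exact hnadj (by have := he ▸ Finset.mem_filter.1 (he ▸ hx); exact
        (Finset.mem_filter.1 (he.symm ▸ hx)).2)
    have := Finset.card_lt_card hss
    rw [Finset.card_erase_of_mem hw] at this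
    omega
  -- s.card is not 2
  have hm4 : 4 ≤ s.card := by
    rcases Nat.lt_or_ge s.card 4 with h4 | h4
    · exfalso
      have hcm : s.card = 2 := by
        rcases hev with ⟨t, ht⟩; omega
      have hc1 : 1 ≤ (cwE H s).card := by omega
      obtain ⟨e1, h1⟩ := Finset.card_pos.1 (by omega : 0 < (cwE H s).card)
      obtain ⟨p, q, rfl, hadj, hps, hqs⟩ := mem_cwE_elim h1
      have : q ∈ ncF H s p := Finset.mem_filter.2
        ⟨Finset.mem_erase.2 ⟨hadj.ne', hqs⟩, hadj⟩
      have := Finset.card_pos.2 ⟨q, this⟩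
      have := hd2a p hps
      omega
    · exact h4
  have hceq : (cwE H s).card = s.card - 1 := by omega
  by_cases hd3 : ∃ v ∈ s, 3 ≤ (ncF H s v).card
  · obtain ⟨v, hv, hd⟩ := hd3
    have hnc := hd2a v hv
    obtain ⟨y, hy, hadj⟩ := exists_nbr (H := H) hv (by omega)
    refine Or.inl (sel_to_match hev hv hy hadj (le_trans (touch_le v y) ?_))
    have htch : 3 ≤ ((cwE H s).filter (fun e => v ∈ e ∨ y ∈ e)).card := by
      refine le_trans (le_trans hd (ncF_card_le_touch hv)) (Finset.card_le_card ?_)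
      exact Finset.monotone_filter_right _ (fun e _ he => Or.inl he)
    omega
  push_neg at hd3
  by_cases hd2 : ∃ v ∈ s, (ncF H s v).card = 2
  · obtain ⟨v, hv, hd⟩ := hd2
    obtain ⟨a, b, hab, hNab⟩ := Finset.card_eq_two.1 hd
    have ha : a ∈ ncF H s v := hNab ▸ (by simp)
    have hb : b ∈ ncF H s v := hNab ▸ (by simp)
    have haE := Finset.mem_filter.1 ha
    have hbE := Finset.mem_filter.1 hb
    have hav : a ≠ v := (Finset.mem_erase.1 haE.1).1
    have hbv : b ≠ v := (Finset.mem_erase.1 hbE.1).1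
    have has : a ∈ s := (Finset.mem_erase.1 haE.1).2
    have hbs : b ∈ s := (Finset.mem_erase.1 hbE.1).2
    have hvaC : Hᶜ.Adj v a := haE.2
    have hvbC : Hᶜ.Adj v b := hbE.2
    by_cases hyy : ∃ y ∈ s.erase v, ¬Hᶜ.Adj v y ∧ 1 ≤ (ncF H s y).card
    · obtain ⟨y, hy, hyna, hy1⟩ := hyy
      have hyv : y ≠ v := (Finset.mem_erase.1 hy).1
      have hys : y ∈ s := (Finset.mem_erase.1 hy).2
      have hadj : H.Adj v y := by
        by_contra hna
        exact hyna ((compl_adj H v y).2 ⟨hyv.symm, hna⟩)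
      obtain ⟨c, hcmem⟩ := Finset.card_pos.1 hy1
      have hcE := Finset.mem_filter.1 hcmem
      have hycC : Hᶜ.Adj y c := hcE.2
      have hcs : c ∈ s := (Finset.mem_erase.1 hcE.1).2
      have hcv : c ≠ v := by
        rintro rfl
        exact hyna hycC.symm
      refine Or.inl (sel_to_match hev hv hy hadj (le_trans (touch_le v y) ?_))
      have he1 : s(v,a) ∈ (cwE H s).filter (fun e => v ∈ e ∨ y ∈ e) :=
        Finset.mem_filter.2 ⟨mem_cwE_pair.2 ⟨hvaC, hv, has⟩, Or.inl (by simp)⟩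
      have he2 : s(v,b) ∈ (cwE H s).filter (fun e => v ∈ e ∨ y ∈ e) :=
        Finset.mem_filter.2 ⟨mem_cwE_pair.2 ⟨hvbC, hv, hbs⟩, Or.inl (by simp)⟩
      have he3 : s(y,c) ∈ (cwE H s).filter (fun e => v ∈ e ∨ y ∈ e) :=
        Finset.mem_filter.2 ⟨mem_cwE_pair.2 ⟨hycC, hys, hcs⟩, Or.inr (by simp)⟩
      have h12 : s(v,a) ≠ s(v,b) := by
        simp [Sym2.eq_iff]
        tauto
      have h13 : s(v,a) ≠ s(y,c) := by
        intro h
        rcases Sym2.eq_iff.1 h with ⟨h1, -⟩ | ⟨h1, -⟩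
        · exact absurd h1.symm hyv
        · exact absurd h1.symm hcv
      have h23 : s(v,b) ≠ s(y,c) := by
        intro h
        rcases Sym2.eq_iff.1 h with ⟨h1, -⟩ | ⟨h1, -⟩
        · exact absurd h1.symm hyv
        · exact absurd h1.symm hcv
      have htri : ({s(v,a), s(v,b), s(y,c)} : Finset (Sym2 V)) ⊆
          (cwE H s).filter (fun e => v ∈ e ∨ y ∈ e) := by
        intro e he
        simp only [Finset.mem_insert, Finset.mem_singleton] at he
        rcases he with rfl | rfl | rfl <;> assumption
      have hcard3 : ({s(v,a), s(v,b), s(y,c)} : Finset (Sym2 V)).card = 3 := by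
        rw [Finset.card_insert_of_notMem (by simp [h12, h13]),
          Finset.card_insert_of_notMem (by simp [h23]), Finset.card_singleton]
      have htch : 3 ≤ ((cwE H s).filter (fun e => v ∈ e ∨ y ∈ e)).card := by
        calc 3 = ({s(v,a), s(v,b), s(y,c)} : Finset (Sym2 V)).card := hcard3.symm
          _ ≤ _ := Finset.card_le_card htri
      omega
    · -- triangle case
      push_neg at hyy
      have hall : ∀ e ∈ cwE H s, ∀ x ∈ e, x = v ∨ x = a ∨ x = b := by
        intro e he x hx
        have hxs : x ∈ s := mem_of_mem_cwE he hx
        by_cases hxv : x = v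
        · exact Or.inl hxv
        have hxe : x ∈ s.erase v := Finset.mem_erase.2 ⟨hxv, hxs⟩
        by_cases hvx : Hᶜ.Adj v x
        · have : x ∈ ncF H s v := Finset.mem_filter.2 ⟨hxe, hvx⟩
          rw [hNab] at this
          simp only [Finset.mem_insert, Finset.mem_singleton] at this
          exact Or.inr this
        · exfalso
          have h0 : (ncF H s x).card = 0 := by
            have := hyy x hxe hvx; omega
          obtain ⟨p, q, rfl, hadj, hps, hqs⟩ := mem_cwE_elim he
          rcases Sym2.mem_iff.1 hx with rfl | rfl
          · have : q ∈ ncF H s x := Finset.mem_filter.2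
              ⟨Finset.mem_erase.2 ⟨hadj.ne', hqs⟩, hadj⟩
            rw [Finset.card_eq_zero.1 h0] at this
            simp at this
          · have : p ∈ ncF H s x := Finset.mem_filter.2
              ⟨Finset.mem_erase.2 ⟨hadj.ne, hps⟩, hadj.symm⟩
            rw [Finset.card_eq_zero.1 h0] at this
            simp at this
      have hsub : cwE H s ⊆ ({s(v,a), s(v,b), s(a,b)} : Finset (Sym2 V)) := by
        intro e he
        obtain ⟨p, q, rfl, hadj, -, -⟩ := mem_cwE_elim he
        have hp := hall _ he p (by simp)
        have hq := hall _ he q (by simp)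
        have := pair_in_triple hp hq hadj.ne
        simpa using this
      have htri3 : ({s(v,a), s(v,b), s(a,b)} : Finset (Sym2 V)).card ≤ 3 := by
        calc ({s(v,a), s(v,b), s(a,b)} : Finset (Sym2 V)).card
            ≤ ({s(v,b), s(a,b)} : Finset (Sym2 V)).card + 1 := Finset.card_insert_le _ _
          _ ≤ (({s(a,b)} : Finset (Sym2 V)).card + 1) + 1 := by
              gcongr
              exact Finset.card_insert_le _ _
          _ = 3 := by rw [Finset.card_singleton]
      have hle3 : (cwE H s).card ≤ 3 := le_trans (Finset.card_le_card hsub) htri3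
      have hm4' : s.card = 4 := by omega
      have hceq3 : (cwE H s).card = 3 := by omega
      have heq : cwE H s = ({s(v,a), s(v,b), s(a,b)} : Finset (Sym2 V)) :=
        Finset.eq_of_subset_of_card_le hsub (by omega)

      have habC : Hᶜ.Adj a b := by
        have : s(a,b) ∈ cwE H s := heq ▸ (by simp)
        exact (mem_cwE_pair.1 this).1
      refine Or.inr (Or.inr ⟨hm4', {v, a, b}, ?_, ?_, ?_⟩)
      · intro x hx
        simp only [Finset.mem_insert, Finset.mem_singleton] at hx
        rcases hx with rfl | rfl | rfl <;> assumption
      · rw [Finset.card_insert_of_notMem (by simp [Ne.symm hav, Ne.symm hbv]),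
          Finset.card_insert_of_notMem (by simp [hab]), Finset.card_singleton]
      · intro x hx y' hy' hne
        simp only [Finset.mem_insert, Finset.mem_singleton] at hx hy'
        rcases hx with rfl | rfl | rfl <;> rcases hy' with rfl | rfl | rfl <;>
          first
            | exact absurd rfl hne
            | exact hvaC | exact hvbC | exact habC
            | exact hvaC.symm | exact hvbC.symm | exact habC.symm
  · -- max degree ≤ 1 : contradiction via handshake
    exfalso
    push_neg at hd2
    have hd1 : ∀ v ∈ s, (ncF H s v).card ≤ 1 := by
      intro v hv
      have h2 := hd2 v hv
      have h3 := hd3 v hv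
      omega
    have := handshake hd1
    omega

end LemB

section Iso
open SimpleGraph

lemma gJoin_adj_ll {α β : Type*} (G : SimpleGraph α) (H : SimpleGraph β) (a b : α) :
    (gJoin G H).Adj (Sum.inl a) (Sum.inl b) ↔ G.Adj a b := by
  simp [gJoin, SimpleGraph.fromRel_adj, SimpleGraph.sum_adj]

lemma gJoin_adj_rr {α β : Type*} (G : SimpleGraph α) (H : SimpleGraph β) (a b : β) :
    (gJoin G H).Adj (Sum.inr a) (Sum.inr b) ↔ H.Adj a b := by
  simp [gJoin, SimpleGraph.fromRel_adj, SimpleGraph.sum_adj]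

lemma gJoin_adj_lr {α β : Type*} (G : SimpleGraph α) (H : SimpleGraph β) (a : α) (b : β) :
    (gJoin G H).Adj (Sum.inl a) (Sum.inr b) := by
  simp [gJoin, SimpleGraph.fromRel_adj, SimpleGraph.sum_adj]

lemma gJoin_adj_rl {α β : Type*} (G : SimpleGraph α) (H : SimpleGraph β) (a : α) (b : β) :
    (gJoin G H).Adj (Sum.inr b) (Sum.inl a) := by
  simp [gJoin, SimpleGraph.fromRel_adj, SimpleGraph.sum_adj]

lemma buildIso1 {n k : ℕ} {G : SimpleGraph (Fin n)}
    (w : Fin n) (L : Finset (Fin n)) (hwL : w ∉ L) (hL : L.card = n - 2*k - 1)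
    (hn2k : 2*k + 1 ≤ n)
    (hGadj : ∀ x y, Gᶜ.Adj x y ↔ (x = w ∧ y ∈ L) ∨ (y = w ∧ x ∈ L)) :
    Nonempty (G ≃g gJoin (⊤ : SimpleGraph (Fin (2*k)))
      ((⊤ : SimpleGraph (Fin (n - 2*k - 1))) ⊕g (⊤ : SimpleGraph (Fin 1)))) := by
  classical
  have hGA : ∀ u v, G.Adj u v ↔ u ≠ v ∧ ¬((u = w ∧ v ∈ L) ∨ (v = w ∧ u ∈ L)) := by
    intro u v
    constructor
    · intro h
      refine ⟨h.ne, fun hp => ?_⟩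
      exact ((compl_adj G u v).1 ((hGadj u v).2 hp)).2 h
    · rintro ⟨hne, hp⟩
      by_contra hna
      exact hp ((hGadj u v).1 ((compl_adj G u v).2 ⟨hne, hna⟩))
  set R : Finset (Fin n) := (Finset.univ \ L).erase w with hR
  have hwR : w ∉ R := Finset.notMem_erase _ _
  have hRL : ∀ x ∈ R, x ∉ L := by
    intro x hx
    have h2 := Finset.mem_of_mem_erase hx
    exact (Finset.mem_sdiff.1 h2).2
  have hRw : ∀ x ∈ R, x ≠ w := fun x hx => (Finset.mem_erase.1 hx).1
  have hLw : ∀ x ∈ L, x ≠ w := fun x hx h => hwL (h ▸ hx)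
  have hcover : ∀ x : Fin n, x ∉ R → x ∉ L → x = w := by
    intro x hxR hxL
    by_contra hxw
    exact hxR (Finset.mem_erase.2 ⟨hxw, Finset.mem_sdiff.2 ⟨Finset.mem_univ _, hxL⟩⟩)
  have hRcard : R.card = 2*k := by
    rw [hR, Finset.card_erase_of_mem (Finset.mem_sdiff.2 ⟨Finset.mem_univ _, hwL⟩),
      Finset.card_sdiff_of_subset (Finset.subset_univ L), Finset.card_univ, Fintype.card_fin, hL]
    omega
  let eR : ↥R ≃ Fin (2*k) := Finset.equivFinOfCardEq hRcard
  let eL : ↥L ≃ Fin (n - 2*k - 1) := Finset.equivFinOfCardEq hL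
  let f : Fin n → Fin (2*k) ⊕ (Fin (n - 2*k - 1) ⊕ Fin 1) := fun v =>
    if hv : v ∈ R then Sum.inl (eR ⟨v, hv⟩)
    else if hl : v ∈ L then Sum.inr (Sum.inl (eL ⟨v, hl⟩))
    else Sum.inr (Sum.inr 0)
  let g : Fin (2*k) ⊕ (Fin (n - 2*k - 1) ⊕ Fin 1) → Fin n :=
    Sum.elim (fun a => ((eR.symm a : ↥R) : Fin n))
      (Sum.elim (fun b => ((eL.symm b : ↥L) : Fin n)) (fun _ => w))
  have hfR : ∀ (v : Fin n) (hv : v ∈ R), f v = Sum.inl (eR ⟨v, hv⟩) := by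
    intro v hv; simp only [f, dif_pos hv]
  have hfL : ∀ (v : Fin n) (hv : v ∈ L), f v = Sum.inr (Sum.inl (eL ⟨v, hv⟩)) := by
    intro v hv
    have hvR : v ∉ R := fun h => hRL v h hv
    simp only [f, dif_neg hvR, dif_pos hv]
  have hfw : f w = Sum.inr (Sum.inr 0) := by
    simp only [f, dif_neg hwR, dif_neg hwL]
  have hgf : Function.LeftInverse g f := by
    intro v
    by_cases hv : v ∈ R
    · rw [hfR v hv]; simp [g]
    · by_cases hl : v ∈ L
      · rw [hfL v hl]; simp [g]
      · rw [hcover v hv hl, hfw]; simp [g]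
  have hfg : Function.RightInverse g f := by
    rintro (a | b | c)
    · have hm : ((eR.symm a : ↥R) : Fin n) ∈ R := (eR.symm a).2
      show f ((eR.symm a : ↥R) : Fin n) = _
      rw [hfR _ hm]
      simp
    · have hm : ((eL.symm b : ↥L) : Fin n) ∈ L := (eL.symm b).2
      show f ((eL.symm b : ↥L) : Fin n) = _
      rw [hfL _ hm]
      simp
    · show f w = Sum.inr (Sum.inr c)
      rw [hfw, Subsingleton.elim c 0]
  have htri : ∀ x : Fin n, x ∈ R ∨ x ∈ L ∨ x = w := by
    intro x
    by_cases h1 : x ∈ R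
    · exact Or.inl h1
    by_cases h2 : x ∈ L
    · exact Or.inr (Or.inl h2)
    exact Or.inr (Or.inr (hcover x h1 h2))
  refine ⟨⟨⟨f, g, hgf, hfg⟩, ?_⟩⟩
  intro u v
  show (gJoin _ _).Adj (f u) (f v) ↔ G.Adj u v
  rw [hGA u v]
  rcases htri u with hu | hu | rfl <;> rcases htri v with hv | hv | heq
  · -- R R
    rw [hfR u hu, hfR v hv, gJoin_adj_ll, top_adj]
    constructor
    · intro h
      refine ⟨fun he => h (congrArg eR (Subtype.ext he)), ?_⟩
      rintro (⟨rfl, -⟩ | ⟨rfl, -⟩)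
      · exact hwR hu
      · exact hwR hv
    · rintro ⟨hne, -⟩ h
      exact hne (congrArg Subtype.val (eR.injective h))
  · -- R L
    rw [hfR u hu, hfL v hv]
    refine iff_of_true (gJoin_adj_lr _ _ _ _) ⟨fun he => hRL u hu (he ▸ hv), ?_⟩
    rintro (⟨rfl, -⟩ | ⟨rfl, -⟩)
    · exact hwR hu
    · exact hLw v hv rfl
  · -- R w
    subst heq
    rw [hfR u hu, hfw]
    refine iff_of_true (gJoin_adj_lr _ _ _ _) ⟨hRw u hu, ?_⟩
    rintro (⟨rfl, -⟩ | ⟨-, hL2⟩)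
    · exact hwR hu
    · exact hRL u hu hL2
  · -- L R
    rw [hfL u hu, hfR v hv]
    refine iff_of_true (gJoin_adj_rl _ _ _ _) ⟨fun he => hRL v hv (he ▸ hu), ?_⟩
    rintro (⟨rfl, -⟩ | ⟨rfl, -⟩)
    · exact hLw u hu rfl
    · exact hwR hv
  · -- L L
    rw [hfL u hu, hfL v hv, gJoin_adj_rr, SimpleGraph.sum_adj]
    simp only [top_adj]
    constructor
    · intro h
      refine ⟨fun he => h (congrArg eL (Subtype.ext he)), ?_⟩
      rintro (⟨rfl, -⟩ | ⟨rfl, -⟩)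
      · exact hLw u hu rfl
      · exact hLw v hv rfl
    · rintro ⟨hne, -⟩ h
      exact hne (congrArg Subtype.val (eL.injective h))
  · -- L w
    subst heq
    rw [hfL u hu, hfw, gJoin_adj_rr, SimpleGraph.sum_adj]
    constructor
    · intro h; exact h.elim
    · rintro ⟨-, hp⟩
      exact absurd (Or.inr ⟨rfl, hu⟩) hp
  · -- w R
    rw [hfw, hfR v hv]
    refine iff_of_true (gJoin_adj_rl _ _ _ _) ⟨fun he => hRw v hv he.symm, ?_⟩
    rintro (⟨-, hL2⟩ | ⟨rfl, -⟩)
    · exact hRL v hv hL2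
    · exact hwR hv
  · -- w L
    rw [hfw, hfL v hv, gJoin_adj_rr, SimpleGraph.sum_adj]
    constructor
    · intro h; exact h.elim
    · rintro ⟨-, hp⟩
      exact absurd (Or.inl ⟨rfl, hv⟩) hp
  · -- w w
    subst heq
    rw [hfw, gJoin_adj_rr]
    simp [SimpleGraph.sum_adj]

lemma buildIso2 {n k : ℕ} {G : SimpleGraph (Fin n)} (hn : n = 2*k + 4)
    (T : Finset (Fin n)) (hT : T.card = 3)
    (hGadj : ∀ x y, Gᶜ.Adj x y ↔ (x ∈ T ∧ y ∈ T ∧ x ≠ y)) :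
    Nonempty (G ≃g gJoin (⊤ : SimpleGraph (Fin (2*k+1))) (⊥ : SimpleGraph (Fin 3))) := by
  classical
  have hGA : ∀ u v, G.Adj u v ↔ u ≠ v ∧ ¬(u ∈ T ∧ v ∈ T) := by
    intro u v
    constructor
    · intro h
      refine ⟨h.ne, fun hp => ?_⟩
      exact ((compl_adj G u v).1 ((hGadj u v).2 ⟨hp.1, hp.2, h.ne⟩)).2 h
    · rintro ⟨hne, hp⟩
      by_contra hna
      have := (hGadj u v).1 ((compl_adj G u v).2 ⟨hne, hna⟩)
      exact hp ⟨this.1, this.2.1⟩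
  set C : Finset (Fin n) := Finset.univ \ T with hC
  have hCcard : C.card = 2*k + 1 := by
    rw [hC, Finset.card_sdiff_of_subset (Finset.subset_univ T), Finset.card_univ, Fintype.card_fin, hT]
    omega
  have hCT : ∀ x ∈ C, x ∉ T := fun x hx => (Finset.mem_sdiff.1 hx).2
  have hcover : ∀ x : Fin n, x ∉ C → x ∈ T := by
    intro x hx
    by_contra h
    exact hx (Finset.mem_sdiff.2 ⟨Finset.mem_univ _, h⟩)
  let eC : ↥C ≃ Fin (2*k+1) := Finset.equivFinOfCardEq hCcard
  let eT : ↥T ≃ Fin 3 := Finset.equivFinOfCardEq hT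
  let f : Fin n → Fin (2*k+1) ⊕ Fin 3 := fun v =>
    if hv : v ∈ C then Sum.inl (eC ⟨v, hv⟩) else Sum.inr (eT ⟨v, hcover v hv⟩)
  let g : Fin (2*k+1) ⊕ Fin 3 → Fin n :=
    Sum.elim (fun a => ((eC.symm a : ↥C) : Fin n)) (fun b => ((eT.symm b : ↥T) : Fin n))
  have hfC : ∀ (v : Fin n) (hv : v ∈ C), f v = Sum.inl (eC ⟨v, hv⟩) := by
    intro v hv; simp only [f, dif_pos hv]
  have hfT : ∀ (v : Fin n) (hv : v ∈ T), f v = Sum.inr (eT ⟨v, hv⟩) := by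
    intro v hv
    have hvC : v ∉ C := fun h => hCT v h hv
    simp only [f, dif_neg hvC]
  have hgf : Function.LeftInverse g f := by
    intro v
    by_cases hv : v ∈ C
    · rw [hfC v hv]; simp [g]
    · rw [hfT v (hcover v hv)]; simp [g]
  have hfg : Function.RightInverse g f := by
    rintro (a | b)
    · have hm : ((eC.symm a : ↥C) : Fin n) ∈ C := (eC.symm a).2
      show f ((eC.symm a : ↥C) : Fin n) = _
      rw [hfC _ hm]
      simp
    · have hm : ((eT.symm b : ↥T) : Fin n) ∈ T := (eT.symm b).2
      show f ((eT.symm b : ↥T) : Fin n) = _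
      rw [hfT _ hm]
      simp
  refine ⟨⟨⟨f, g, hgf, hfg⟩, ?_⟩⟩
  intro u v
  show (gJoin _ _).Adj (f u) (f v) ↔ G.Adj u v
  rw [hGA u v]
  by_cases hu : u ∈ C <;> by_cases hv : v ∈ C
  · rw [hfC u hu, hfC v hv, gJoin_adj_ll, top_adj]
    constructor
    · intro h
      refine ⟨fun he => h (congrArg eC (Subtype.ext he)), fun hp => hCT u hu hp.1⟩
    · rintro ⟨hne, -⟩ h
      exact hne (congrArg Subtype.val (eC.injective h))
  · rw [hfC u hu, hfT v (hcover v hv)]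
    refine iff_of_true (gJoin_adj_lr _ _ _ _)
      ⟨fun he => hCT u hu (he ▸ hcover v hv), fun hp => hCT u hu hp.1⟩
  · rw [hfT u (hcover u hu), hfC v hv]
    refine iff_of_true (gJoin_adj_rl _ _ _ _)
      ⟨fun he => hCT v hv (he ▸ hcover u hu), fun hp => hCT v hv hp.2⟩
  · rw [hfT u (hcover u hu), hfT v (hcover v hv), gJoin_adj_rr]
    simp only [bot_adj, false_iff]
    rintro ⟨hne, hp⟩
    exact hp ⟨hcover u hu, hcover v hv⟩

end Iso

section MatchCard
open SimpleGraph
variable {V : Type*} [Fintype V] [DecidableEq V] {G : SimpleGraph V}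

lemma matching_verts_ncard {M : G.Subgraph} (hM : M.IsMatching) :
    M.verts.ncard = 2 * M.edgeSet.ncard := by
  classical
  have hefin : M.edgeSet.Finite := Set.toFinite _
  have hvfin : M.verts.Finite := Set.toFinite _
  set E : Finset (Sym2 V) := hefin.toFinset with hE
  set W : Finset V := hvfin.toFinset with hW
  set f : Sym2 V → Finset V := fun e => Finset.univ.filter (· ∈ e) with hf
  have hmem : ∀ e, e ∈ E ↔ e ∈ M.edgeSet := fun e => Set.Finite.mem_toFinset _
  have hcard2 : ∀ e ∈ E, (f e).card = 2 := by
    intro e he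
    rw [hmem] at he
    induction e with
    | _ a b =>
      have hadj : M.Adj a b := (Subgraph.mem_edgeSet).1 he
      have : f s(a,b) = {a, b} := by
        ext x; simp [hf, Sym2.mem_iff]
      rw [this, Finset.card_insert_of_notMem (by simp [hadj.ne]), Finset.card_singleton]
  have hdisj : ∀ e1 ∈ E, ∀ e2 ∈ E, e1 ≠ e2 → Disjoint (f e1) (f e2) := by
    intro e1 h1 e2 h2 hne
    rw [hmem] at h1 h2
    rw [Finset.disjoint_left]
    intro x hx1 hx2
    simp only [hf, Finset.mem_filter] at hx1 hx2
    obtain ⟨p, hp⟩ := Sym2.mem_iff_exists.1 hx1.2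
    obtain ⟨q, hq⟩ := Sym2.mem_iff_exists.1 hx2.2
    subst hp hq
    have hadj1 : M.Adj x p := (Subgraph.mem_edgeSet).1 h1
    have hadj2 : M.Adj x q := (Subgraph.mem_edgeSet).1 h2
    obtain ⟨w, -, huniq⟩ := hM (M.edge_vert hadj1)
    exact hne (by rw [huniq p hadj1, huniq q hadj2])
  have hunion : E.biUnion f = W := by
    ext x
    simp only [Finset.mem_biUnion, hf, Finset.mem_filter, hW, Set.Finite.mem_toFinset]
    constructor
    · rintro ⟨e, he, -, hxe⟩
      rw [hmem] at he
      obtain ⟨p, hp⟩ := Sym2.mem_iff_exists.1 hxe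
      subst hp
      exact M.edge_vert ((Subgraph.mem_edgeSet).1 he)
    · intro hx
      obtain ⟨w, hw, -⟩ := hM hx
      exact ⟨s(x,w), (hmem _).2 ((Subgraph.mem_edgeSet).2 hw), Finset.mem_univ _, by simp⟩
  have hcardE : M.edgeSet.ncard = E.card := Set.ncard_eq_toFinset_card _ hefin
  have hcardW : M.verts.ncard = W.card := Set.ncard_eq_toFinset_card _ hvfin
  rw [hcardE, hcardW, ← hunion, Finset.card_biUnion hdisj,
    Finset.sum_congr rfl hcard2, Finset.sum_const, smul_eq_mul, mul_comm]

end MatchCard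

section MainThm
open SimpleGraph Finset

theorem size_k_extendable (k n : ℕ) (hk : 0 < k) (hn : 0 < n) (hnev : Even n)
    (G : SimpleGraph (Fin n)) (hconn : G.Connected)
    (hsize : (n - 1).choose 2 + 2 * k ≤ G.edgeSet.ncard) :
    kExtendable G k ∨
    Nonempty (G ≃g gJoin (⊤ : SimpleGraph (Fin (2 * k)))
      ((⊤ : SimpleGraph (Fin (n - 2 * k - 1))) ⊕g (⊤ : SimpleGraph (Fin 1)))) ∨
    Nonempty (G ≃g gJoin (⊤ : SimpleGraph (Fin (2 * k + 1))) (⊥ : SimpleGraph (Fin 3))) := by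
  classical
  have hedge : G.edgeSet.ncard = G.edgeFinset.card := Set.ncard_eq_toFinset_card' _
  have hsum : G.edgeFinset.card + Gᶜ.edgeFinset.card = n.choose 2 := by
    have htop : (G ⊔ Gᶜ).edgeFinset = (⊤ : SimpleGraph (Fin n)).edgeFinset :=
      Set.toFinset_congr (by rw [isCompl_compl.sup_eq_top])
    rw [← Finset.card_union_of_disjoint (disjoint_edgeFinset.2 disjoint_compl_right),
      ← edgeFinset_sup, htop, card_edgeFinset_top_eq_card_choose_two,
      Fintype.card_fin]
  have hchoose : n.choose 2 = (n-1).choose 2 + (n-1) := by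
    obtain ⟨m, rfl⟩ : ∃ m, n = m + 1 := ⟨n - 1, by omega⟩
    simp [Nat.choose_succ_succ, Nat.choose_one_right, Nat.add_comm]
  have hks : (n-1).choose 2 + 2*k ≤ G.edgeFinset.card := hedge ▸ hsize
  have hGle : G.edgeFinset.card ≤ n.choose 2 := by omega
  have hcompl : Gᶜ.edgeFinset.card ≤ n - 1 - 2*k := by omega
  have h2k2 : 2*k + 2 ≤ n := by
    obtain ⟨t, ht⟩ := hnev
    omega
  by_cases hcase1 : ∃ w : Fin n, ∃ L : Finset (Fin n), w ∉ L ∧ L.card = n - 2*k - 1 ∧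
      ∀ x y : Fin n, (Gᶜ.Adj x y ↔ (x = w ∧ y ∈ L) ∨ (y = w ∧ x ∈ L))
  · obtain ⟨w, L, hwL, hL, hadj⟩ := hcase1
    exact Or.inr (Or.inl (buildIso1 w L hwL hL (by omega) hadj))
  by_cases hcase2 : n = 2*k + 4 ∧ ∃ T : Finset (Fin n), T.card = 3 ∧
      ∀ x y : Fin n, (Gᶜ.Adj x y ↔ (x ∈ T ∧ y ∈ T ∧ x ≠ y))
  · obtain ⟨hn4, T, hT, hadj⟩ := hcase2
    refine Or.inr (Or.inr ?_)
    have := buildIso2 (k := k) hn4 T hT hadj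
    exact this
  left
  intro M hMmatch hMk
  have hverts : M.verts.ncard = 2*k := by rw [matching_verts_ncard hMmatch, hMk]
  have hvfin : M.verts.Finite := Set.toFinite _
  set s : Finset (Fin n) := Finset.univ \ hvfin.toFinset with hs
  have hsmem : ∀ x : Fin n, x ∈ s ↔ x ∉ M.verts := by
    intro x
    simp only [hs, Finset.mem_sdiff, Finset.mem_univ, true_and, Set.Finite.mem_toFinset]
  have hvcard : hvfin.toFinset.card = 2*k := by
    rw [← Set.ncard_eq_toFinset_card _ hvfin, hverts]
  have hscard : s.card = n - 2*k := by
    rw [hs, Finset.card_sdiff_of_subset (Finset.subset_univ _), Finset.card_univ, Fintype.card_fin, hvcard]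
  have heven : Even s.card := by
    obtain ⟨t, ht⟩ := hnev
    rw [hscard]
    exact ⟨t - k, by omega⟩
  have hcw : (cwE G s).card ≤ s.card - 1 := by
    have h1 : cwE G s ⊆ Gᶜ.edgeFinset := fun e he => mem_edgeFinset.2 (mem_cwE_edgeSet he)
    have h2 := Finset.card_le_card h1
    omega
  rcases lemB heven hcw with ⟨M', hM', hMv⟩ | ⟨w, hw, hstar⟩ | ⟨hs4, t, hts, ht3, htri⟩
  · -- can extend
    have hdisj : Disjoint M.support M'.support := by
      rw [hMmatch.support_eq_verts, hM'.support_eq_verts, hMv, Set.disjoint_right]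
      intro x hx
      exact (hsmem x).1 hx
    refine ⟨M ⊔ M', ⟨hMmatch.sup hM' hdisj, ?_⟩, Subgraph.edgeSet_mono le_sup_left⟩
    intro v
    rw [Subgraph.verts_sup, hMv]
    by_cases hv : v ∈ M.verts
    · exact Or.inl hv
    · exact Or.inr ((hsmem v).2 hv)
  · -- star case: contradicts hcase1
    exfalso
    apply hcase1
    have hws : w ∈ s := hw
    refine ⟨w, s.erase w, Finset.notMem_erase _ _, by
      rw [Finset.card_erase_of_mem hws, hscard], ?_⟩
    set st : Finset (Sym2 (Fin n)) := (s.erase w).image (fun x => s(w,x)) with hstdef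
    have hinj : Set.InjOn (fun x => s(w,x)) (s.erase w) := by
      intro x1 h1 x2 h2 he
      rcases Sym2.eq_iff.1 he with ⟨-, h⟩ | ⟨hw2, h⟩
      · exact h
      · exact h.trans hw2
    have hstcard : st.card = s.card - 1 := by
      rw [hstdef, Finset.card_image_of_injOn hinj, Finset.card_erase_of_mem hws]
    have hstsub : st ⊆ Gᶜ.edgeFinset := by
      intro e he
      obtain ⟨x, hx, rfl⟩ := Finset.mem_image.1 he
      rw [mem_edgeFinset, mem_edgeSet]
      exact hstar x hx
    have heq : Gᶜ.edgeFinset = st := by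
      refine (Finset.eq_of_subset_of_card_le hstsub ?_).symm
      rw [hstcard, hscard]
      omega
    intro x y
    rw [← mem_edgeSet, ← mem_edgeFinset, heq, hstdef, Finset.mem_image]
    constructor
    · rintro ⟨z, hz, hzz⟩
      have hzw : z ≠ w := (Finset.mem_erase.1 hz).1
      rcases Sym2.eq_iff.1 hzz with ⟨rfl, rfl⟩ | ⟨rfl, rfl⟩
      · exact Or.inl ⟨rfl, hz⟩
      · exact Or.inr ⟨rfl, hz⟩
    · rintro (⟨rfl, hy⟩ | ⟨rfl, hx⟩)
      · exact ⟨y, hy, rfl⟩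
      · exact ⟨x, hx, Sym2.eq_swap⟩
  · -- triangle case: contradicts hcase2
    exfalso
    apply hcase2
    have hn4 : n = 2*k + 4 := by omega
    refine ⟨hn4, t, ht3, ?_⟩
    obtain ⟨a, b, c, hab, hac, hbc, rfl⟩ := Finset.card_eq_three.1 ht3
    have hmema : a ∈ ({a, b, c} : Finset (Fin n)) := by simp
    have hmemb : b ∈ ({a, b, c} : Finset (Fin n)) := by simp
    have hmemc : c ∈ ({a, b, c} : Finset (Fin n)) := by simp
    set st : Finset (Sym2 (Fin n)) := {s(a,b), s(a,c), s(b,c)} with hstdef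
    have h12 : s(a,b) ≠ s(a,c) := by
      intro h
      rcases Sym2.eq_iff.1 h with ⟨-, h1⟩ | ⟨h1, -⟩
      · exact hbc h1
      · exact hac h1
    have h13 : s(a,b) ≠ s(b,c) := by
      intro h
      rcases Sym2.eq_iff.1 h with ⟨h1, -⟩ | ⟨h1, -⟩
      · exact hab h1
      · exact hac h1
    have h23 : s(a,c) ≠ s(b,c) := by
      intro h
      rcases Sym2.eq_iff.1 h with ⟨h1, -⟩ | ⟨h1, -⟩
      · exact hab h1
      · exact hac h1
    have hstcard : st.card = 3 := by
      rw [hstdef, Finset.card_insert_of_notMem (by simp [h12, h13]),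
        Finset.card_insert_of_notMem (by simp [h23]), Finset.card_singleton]
    have hstsub : st ⊆ Gᶜ.edgeFinset := by
      intro e he
      rw [hstdef] at he
      simp only [Finset.mem_insert, Finset.mem_singleton] at he
      rcases he with rfl | rfl | rfl <;> rw [mem_edgeFinset, mem_edgeSet]
      · exact htri a hmema b hmemb hab
      · exact htri a hmema c hmemc hac
      · exact htri b hmemb c hmemc hbc
    have heq : Gᶜ.edgeFinset = st := by
      refine (Finset.eq_of_subset_of_card_le hstsub ?_).symm
      rw [hstcard]
      omega
    intro x y
    rw [← mem_edgeSet, ← mem_edgeFinset, heq, hstdef]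
    simp only [Finset.mem_insert, Finset.mem_singleton]
    constructor
    · rintro (h | h | h) <;>
        (rcases Sym2.eq_iff.1 h with ⟨rfl, rfl⟩ | ⟨rfl, rfl⟩) <;>
        refine ⟨by simp, by simp, ?_⟩ <;>
        (rintro rfl; simp_all)
    · rintro ⟨hx, hy, hne⟩
      have hx' : x = a ∨ x = b ∨ x = c := by simpa using hx
      have hy' : y = a ∨ y = b ∨ y = c := by simpa using hy
      exact pair_in_triple hx' hy' hne

end MainThm
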